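/- Let v ≥ 1, z ≥ 1 and M ≥ 0. There exists a constant K, depending only on z, v and M, with the following property: for every n ∈ ℕ and every family (ξ_A)_{A ∈ 𝒫_v(n)} of random variables on a common probability space that is independent over disjoint index sets and satisfies |ξ_A| ≤ M almost surely and E[ξ_A] = 0 for every A, one has |E[(Σ_{A ∈ 𝒫_v(n)} ξ_A)^z]| ≤ K · n^{zv − ⌈z/2⌉}. In particular, if z is odd, then n^{−z(v−1/2)} E[(Σ_A ξ_A)^z] → 0 as n → ∞. -/

import Mathlib

open MeasureTheory Filter ProbabilityTheory

/-- A family of real random variables `ξ a`, where each index `a` carries a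
support set `idx a ⊆ Fin n`, is *independent over disjoint index sets* if
whenever subcollections `𝒜 i` have pairwise disjoint unions of support sets,
the σ-algebras generated by the corresponding subfamilies are mutually
independent. -/
def IndepOverDisjoint {Ω ι : Type*} {n : ℕ} [MeasurableSpace Ω]
    (idx : ι → Finset (Fin n)) (ξ : ι → Ω → ℝ) (μ : Measure Ω) : Prop :=
  ∀ (r : ℕ) (𝒜 : Fin r → Set ι),
    (∀ i j, i ≠ j → Disjoint (⋃ a ∈ 𝒜 i, (idx a : Set (Fin n)))
                             (⋃ a ∈ 𝒜 j, (idx a : Set (Fin n)))) →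
    iIndep (fun i => ⨆ a ∈ 𝒜 i, MeasurableSpace.comap (ξ a) inferInstance) μ

section Aux

private lemma union_card_le {n z v : ℕ} (hz : 1 ≤ z) (hv : 1 ≤ v)
    (F : Fin z → Finset (Fin n)) (hcard : ∀ i, (F i).card = v)
    (hbad : ∀ i, ∃ j, j ≠ i ∧ ¬ Disjoint (F i) (F j)) :
    (Finset.univ.biUnion F).card ≤ z * v - (z + 1) / 2 := by
  classical
  set prev : Fin z → Finset (Fin n) := fun i => (Finset.Iio i).biUnion F with hprev
  set g : Fin z → ℕ := fun i => (F i \ prev i).card with hg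
  have hgv : ∀ i, g i ≤ v := fun i => by
    simpa [hcard i] using Finset.card_le_card (Finset.sdiff_subset (s := F i) (t := prev i))
  set s : Fin z → ℕ := fun i => v - g i with hs
  have hgs : ∀ i, g i + s i = v := fun i => by have := hgv i; simp [hs]; omega
  -- covering
  have hcover : Finset.univ.biUnion F ⊆ Finset.univ.biUnion (fun i => F i \ prev i) := by
    intro x hx
    simp only [Finset.mem_biUnion, Finset.mem_univ, true_and] at hx ⊢
    obtain ⟨i, hi⟩ := hx
    set T : Finset (Fin z) := Finset.univ.filter (fun j => x ∈ F j) with hT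
    have hTne : T.Nonempty := ⟨i, by simp [hT, hi]⟩
    refine ⟨T.min' hTne, ?_⟩
    have hmem : x ∈ F (T.min' hTne) := by
      have := T.min'_mem hTne; simp [hT] at this; exact this
    refine Finset.mem_sdiff.mpr ⟨hmem, fun hxp => ?_⟩
    simp only [hprev, Finset.mem_biUnion, Finset.mem_Iio] at hxp
    obtain ⟨j, hj1, hj2⟩ := hxp
    exact absurd (T.min'_le j (by simp [hT, hj2])) (by exact not_le.mpr hj1)
  have h1 : (Finset.univ.biUnion F).card ≤ ∑ i, g i :=
    le_trans (Finset.card_le_card hcover) (Finset.card_biUnion_le)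
  -- early indices
  set Early : Fin z → Prop := fun i => ∀ j, j < i → Disjoint (F i) (F j) with hEarly
  set E : Finset (Fin z) := Finset.univ.filter (fun i => Early i) with hE
  set L : Finset (Fin z) := Finset.univ.filter (fun i => ¬ Early i) with hL
  -- partner function
  set p : Fin z → Fin z := fun i =>
    if h : ∃ j, i < j ∧ ¬ Disjoint (F i) (F j) then h.choose else i with hpdef
  have hp : ∀ i ∈ E, i < p i ∧ ¬ Disjoint (F i) (F (p i)) := by
    intro i hi
    simp only [hE, Finset.mem_filter] at hi
    obtain ⟨j, hji, hdj⟩ := hbad i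
    have hij : i < j := by
      rcases lt_or_gt_of_ne hji with h | h
      · exact absurd ((hi.2 j h).symm) (fun hc => hdj hc.symm)
      · exact h
    have hex : ∃ j, i < j ∧ ¬ Disjoint (F i) (F j) := ⟨j, hij, hdj⟩
    have := hex.choose_spec
    simp only [hpdef, dif_pos hex]
    exact this
  -- fiber counting
  have hEcard : E.card = ∑ j, (E.filter (fun i => p i = j)).card :=
    Finset.card_eq_sum_card_fiberwise (fun i _ => Finset.mem_univ (p i))
  -- x₀ exists
  have hx₀ : Nonempty (Fin n) := by
    have := hcard ⟨0, hz⟩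
    have : (F ⟨0, hz⟩).Nonempty := Finset.card_pos.mp (by omega)
    exact ⟨this.choose⟩
  obtain ⟨x₀⟩ := hx₀
  -- per-j bound (b)
  have hb : ∀ j, (E.filter (fun i => p i = j)).card + g j ≤ v := by
    intro j
    have hinj : (E.filter (fun i => p i = j)).card ≤ (F j ∩ prev j).card := by
      set φ : Fin z → Fin n := fun i =>
        if h : ((F i) ∩ (F j)).Nonempty then h.choose else x₀ with hφ
      apply Finset.card_le_card_of_injOn φ
      · intro i hi
        simp only [Finset.mem_coe, Finset.mem_filter] at hi
        obtain ⟨hiE, hpi⟩ := hi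
        obtain ⟨hlt, hnd⟩ := hp i hiE
        rw [hpi] at hlt hnd
        have hne : ((F i) ∩ (F j)).Nonempty :=
          Finset.not_disjoint_iff_nonempty_inter.mp hnd
        have hmem := hne.choose_spec
        rw [Finset.mem_inter] at hmem
        simp only [hφ, dif_pos hne]
        refine Finset.mem_inter.mpr ⟨hmem.2, ?_⟩
        simp only [hprev, Finset.mem_biUnion, Finset.mem_Iio]
        exact ⟨i, hlt, hmem.1⟩
      · intro i hi i' hi' heq
        by_contra hne
        simp only [Finset.mem_coe, Finset.mem_filter] at hi hi'
        have key : ∀ a b : Fin z, a ∈ E → b ∈ E → a < b →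
            φ a ∈ F a → φ b ∈ F b → φ a ≠ φ b := by
          intro a b haE hbE hab hfa hfb hcontra
          simp only [hE, Finset.mem_filter] at hbE
          have := (hbE.2 a hab)
          exact (Finset.disjoint_left.mp this hfb) (hcontra ▸ hfa)
        have hmemF : ∀ a : Fin z, a ∈ E → p a = j → φ a ∈ F a := by
          intro a haE hpa
          obtain ⟨hlt, hnd⟩ := hp a haE
          rw [hpa] at hnd
          have hne : ((F a) ∩ (F j)).Nonempty :=
            Finset.not_disjoint_iff_nonempty_inter.mp hnd
          have hmem := hne.choose_spec
          rw [Finset.mem_inter] at hmem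
          simp only [hφ, dif_pos hne]
          exact hmem.1
        rcases lt_trichotomy i i' with h | h | h
        · exact key i i' hi.1 hi'.1 h (hmemF i hi.1 hi.2) (hmemF i' hi'.1 hi'.2) heq
        · exact hne h
        · exact key i' i hi'.1 hi.1 h (hmemF i' hi'.1 hi'.2) (hmemF i hi.1 hi.2) heq.symm
    have hsplit : (F j ∩ prev j).card + g j = v := by
      have := Finset.card_inter_add_card_sdiff (F j) (prev j)
      simp only [hg]
      rw [this, hcard j]
    omega
  have hbs : ∀ j, (E.filter (fun i => p i = j)).card ≤ s j := by
    intro j; have := hb j; have := hgv j; simp only [hs]; omega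
  -- per-j bound (a)
  have ha : ∀ j ∈ L, 1 ≤ s j := by
    intro j hj
    simp only [hL, Finset.mem_filter, hEarly, not_forall] at hj
    obtain ⟨_, j', hj'1, hj'2⟩ := hj
    obtain ⟨hlt, hnd⟩ : j' < j ∧ ¬ Disjoint (F j) (F j') := ⟨hj'1, hj'2⟩
    obtain ⟨x, hx⟩ := Finset.not_disjoint_iff_nonempty_inter.mp hnd
    rw [Finset.mem_inter] at hx
    have hxprev : x ∈ prev j := by
      simp only [hprev, Finset.mem_biUnion, Finset.mem_Iio]
      exact ⟨j', hlt, hx.2⟩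
    have : g j < v := by
      rw [← hcard j]
      apply Finset.card_lt_card
      rw [Finset.ssubset_iff_of_subset (Finset.sdiff_subset)]
      exact ⟨x, hx.1, by simp [hxprev]⟩
    simp only [hs]; omega
  -- total
  have hEL : E.card + L.card = z := by
    have := Finset.card_filter_add_card_filter_not
      (s := (Finset.univ : Finset (Fin z))) (p := fun i => Early i)
    simpa [hE, hL] using this
  have hsum1 : E.card ≤ ∑ j, s j := by
    rw [hEcard]; exact Finset.sum_le_sum (fun j _ => hbs j)
  have hsum2 : L.card ≤ ∑ j, s j := by
    calc L.card = ∑ j ∈ L, 1 := by simp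
    _ ≤ ∑ j ∈ L, s j := Finset.sum_le_sum ha
    _ ≤ ∑ j, s j := Finset.sum_le_sum_of_subset (Finset.filter_subset _ _)
  have htot : ∑ i, (g i + s i) = z * v := by
    simp only [hgs]
    simp [Finset.sum_const, Finset.card_univ, Nat.mul_comm]
  rw [Finset.sum_add_distrib] at htot
  have hz2 : z ≤ 2 * ∑ j, s j := by omega
  omega


private lemma count_bad {n z v : ℕ} (hz : 1 ≤ z) (hv : 1 ≤ v) :
    (Finset.univ.filter (fun f : Fin z → {A : Finset (Fin n) // A.card = v} =>
        ∀ i, ∃ j, j ≠ i ∧ ¬ Disjoint (f i).1 (f j).1)).card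
      ≤ 2 ^ ((z * v - (z + 1) / 2) * z) * n ^ (z * v - (z + 1) / 2) := by
  classical
  set m := z * v - (z + 1) / 2 with hm
  set B := (Finset.univ.filter (fun f : Fin z → {A : Finset (Fin n) // A.card = v} =>
      ∀ i, ∃ j, j ≠ i ∧ ¬ Disjoint (f i).1 (f j).1)) with hB
  rcases B.eq_empty_or_nonempty with hBe | hBne
  · simp [hBe]
  obtain ⟨f₀, hf₀⟩ := hBne
  have hx₀ : Nonempty (Fin n) := by
    have h1 := (f₀ ⟨0, hz⟩).2
    have : ((f₀ ⟨0, hz⟩).1).Nonempty := Finset.card_pos.mp (by omega)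
    exact ⟨this.choose⟩
  obtain ⟨x₀⟩ := hx₀
  -- covering maps
  have hcov : ∀ U : Finset (Fin n), U.card ≤ m →
      ∃ e : Fin m → Fin n, U ⊆ Finset.univ.image e := by
    intro U hU
    set iso := U.orderIsoOfFin (rfl : U.card = U.card) with hiso
    refine ⟨fun k => if h : (k : ℕ) < U.card then (iso ⟨k, h⟩ : Fin n) else x₀, ?_⟩
    intro u hu
    set i := iso.symm ⟨u, hu⟩ with hi
    refine Finset.mem_image.mpr ⟨⟨(i : ℕ), lt_of_lt_of_le i.2 hU⟩, Finset.mem_univ _, ?_⟩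
    simp only [dif_pos i.2]
    have : iso ⟨(i:ℕ), i.2⟩ = iso i := by congr 1
    rw [this, hi, OrderIso.apply_symm_apply]
  set UU : (Fin z → {A : Finset (Fin n) // A.card = v}) → Finset (Fin n) :=
    fun f => Finset.univ.biUnion (fun i => (f i).1) with hUU
  have hUm : ∀ f ∈ B, (UU f).card ≤ m := by
    intro f hf
    simp only [hB, Finset.mem_filter] at hf
    exact union_card_le hz hv _ (fun i => (f i).2) hf.2
  set Efun : (Fin z → {A : Finset (Fin n) // A.card = v}) → (Fin m → Fin n) :=
    fun f => if h : (UU f).card ≤ m then (hcov _ h).choose else fun _ => x₀ with hEfun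
  have hEspec : ∀ f ∈ B, UU f ⊆ Finset.univ.image (Efun f) := by
    intro f hf
    have h := hUm f hf
    simp only [hEfun, dif_pos h]
    exact (hcov _ h).choose_spec
  -- key reconstruction
  have key : ∀ f ∈ B, ∀ i, (f i).1 =
      (Finset.univ.filter (fun k => Efun f k ∈ (f i).1)).image (Efun f) := by
    intro f hf i
    ext y
    constructor
    · intro hy
      have hyU : y ∈ UU f := by
        simp only [hUU, Finset.mem_biUnion]; exact ⟨i, Finset.mem_univ _, hy⟩
      obtain ⟨k, _, hk⟩ := Finset.mem_image.mp (hEspec f hf hyU)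
      exact Finset.mem_image.mpr ⟨k, Finset.mem_filter.mpr ⟨Finset.mem_univ _, by rw [hk]; exact hy⟩, hk⟩
    · intro hy
      obtain ⟨k, hk1, hk2⟩ := Finset.mem_image.mp hy
      rw [← hk2]; exact (Finset.mem_filter.mp hk1).2
  -- injection
  have hinj : B.card ≤ (Finset.univ :
      Finset ((Fin m → Fin n) × (Fin z → Finset (Fin m)))).card := by
    apply Finset.card_le_card_of_injOn
      (fun f => (Efun f, fun i => Finset.univ.filter (fun k => Efun f k ∈ (f i).1)))
      (fun f _ => Finset.mem_univ _)
    intro f hf f' hf' heq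
    simp only [Finset.mem_coe] at hf hf'
    have h1 : Efun f = Efun f' := congrArg Prod.fst heq
    have h2 : (fun i => Finset.univ.filter (fun k => Efun f k ∈ (f i).1)) =
        (fun i => Finset.univ.filter (fun k => Efun f' k ∈ (f' i).1)) := congrArg Prod.snd heq
    funext i
    apply Subtype.ext
    rw [key f hf i, key f' hf' i, ← h1, congrFun h2 i, h1]
  calc B.card ≤ _ := hinj
  _ ≤ 2 ^ (m * z) * n ^ m := by
      rw [Finset.card_univ]
      simp only [Fintype.card_prod, Fintype.card_fun, Fintype.card_finset, Fintype.card_fin]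
      rw [← pow_mul]
      ring_nf
      omega


private lemma zero_term {n v z : ℕ} {Ω : Type} [MeasurableSpace Ω] {μ : Measure Ω}
    [IsProbabilityMeasure μ] {ξ : {A : Finset (Fin n) // A.card = v} → Ω → ℝ}
    (hmeas : ∀ A, Measurable (ξ A))
    (hmean : ∀ A, ∫ ω, ξ A ω ∂μ = 0)
    (hind : IndepOverDisjoint (fun A => A.1) ξ μ)
    (f : Fin z → {A : Finset (Fin n) // A.card = v}) (i₀ : Fin z)
    (hdisj : ∀ j, j ≠ i₀ → Disjoint ((f i₀).1) ((f j).1)) :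
    ∫ ω, ∏ i, ξ (f i) ω ∂μ = 0 := by
  classical
  set m2 : Fin 2 → Set {A : Finset (Fin n) // A.card = v} := ![{f i₀}, f '' {j | j ≠ i₀}] with hm2
  have hsets : ∀ (i j : Fin 2), i ≠ j →
      Disjoint (⋃ a ∈ m2 i, ((a.1 : Finset (Fin n)) : Set (Fin n)))
               (⋃ a ∈ m2 j, ((a.1 : Finset (Fin n)) : Set (Fin n))) := by
    have base : Disjoint (⋃ a ∈ m2 0, ((a.1 : Finset (Fin n)) : Set (Fin n)))
        (⋃ a ∈ m2 1, ((a.1 : Finset (Fin n)) : Set (Fin n))) := by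
      rw [Set.disjoint_left]
      intro x hx hx'
      simp only [hm2, Matrix.cons_val_zero, Matrix.cons_val_one, Matrix.head_cons,
        Set.mem_iUnion, Set.mem_singleton_iff, Set.mem_image, Set.mem_setOf_eq,
        exists_prop] at hx hx'
      obtain ⟨a, rfl, hxa⟩ := hx
      obtain ⟨b, ⟨j, hj, rfl⟩, hxb⟩ := hx'
      exact (Set.disjoint_left.mp (Finset.disjoint_coe.mpr (hdisj j hj))) hxa hxb
    intro i j hij
    fin_cases i <;> fin_cases j <;> first | exact absurd rfl hij | exact base | exact base.symm
  have hii := hind 2 m2 hsets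
  have h01 := hii.indep (show (0 : Fin 2) ≠ 1 by decide)
  set Y : Ω → ℝ := fun ω => ∏ j ∈ Finset.univ.erase i₀, ξ (f j) ω with hY
  have hYm : Measurable Y := Finset.measurable_prod _ (fun j _ => hmeas (f j))
  set mA : MeasurableSpace Ω := ⨆ a ∈ m2 0, MeasurableSpace.comap (ξ a) inferInstance with hmA
  set mB : MeasurableSpace Ω := ⨆ a ∈ m2 1, MeasurableSpace.comap (ξ a) inferInstance with hmB
  have hYmB : Measurable[mB] Y := by
    apply Finset.measurable_prod
    intro j hj
    apply Measurable.of_comap_le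
    refine le_trans ?_ (le_refl mB)
    rw [hmB]
    exact le_iSup₂ (f := fun (a : {A : Finset (Fin n) // A.card = v}) (_ : a ∈ m2 1) => MeasurableSpace.comap (ξ a) inferInstance)
      (f j) (by simp [hm2]; exact ⟨j, (Finset.mem_erase.mp hj).1, rfl⟩)
  have hXmA : MeasurableSpace.comap (ξ (f i₀)) inferInstance ≤ mA := by
    rw [hmA]
    exact le_iSup₂ (f := fun (a : {A : Finset (Fin n) // A.card = v}) (_ : a ∈ m2 0) => MeasurableSpace.comap (ξ a) inferInstance)
      (f i₀) (by simp [hm2])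
  have hIF : IndepFun (ξ (f i₀)) Y μ := by
    rw [IndepFun_iff_Indep]
    exact indep_of_indep_of_le_right (indep_of_indep_of_le_left h01 hXmA) hYmB.comap_le
  have hprod : (fun ω => ∏ i, ξ (f i) ω) = (ξ (f i₀)) * Y := by
    funext ω
    simp only [Pi.mul_apply, hY]
    exact (Finset.mul_prod_erase Finset.univ (fun i => ξ (f i) ω) (Finset.mem_univ i₀)).symm
  rw [hprod, hIF.integral_mul_eq_mul_integral (hmeas (f i₀)).aestronglyMeasurable hYm.aestronglyMeasurable,
    hmean (f i₀), zero_mul]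


private lemma main_bound {v z : ℕ} (hv : 1 ≤ v) (hz : 1 ≤ z) {M : ℝ} (hM : 0 ≤ M)
    (n : ℕ) (Ω : Type) [MeasurableSpace Ω] (μ : Measure Ω)
    [IsProbabilityMeasure μ] (ξ : {A : Finset (Fin n) // A.card = v} → Ω → ℝ)
    (hmeas : ∀ A, Measurable (ξ A))
    (hbdd : ∀ A, ∀ᵐ ω ∂μ, |ξ A ω| ≤ M)
    (hmean : ∀ A, ∫ ω, ξ A ω ∂μ = 0)
    (hind : IndepOverDisjoint (fun A => A.1) ξ μ) :
    |∫ ω, (∑ A, ξ A ω) ^ z ∂μ| ≤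
      (M ^ z * 2 ^ ((z * v - (z + 1) / 2) * z)) * (n : ℝ) ^ (z * v - (z + 1) / 2) := by
  classical
  have hprodmeas : ∀ f : Fin z → {A : Finset (Fin n) // A.card = v}, Measurable (fun ω => ∏ i, ξ (f i) ω) :=
    fun f => Finset.measurable_prod _ (fun i _ => hmeas (f i))
  have hprodbdd : ∀ f : Fin z → {A : Finset (Fin n) // A.card = v}, ∀ᵐ ω ∂μ, ‖∏ i, ξ (f i) ω‖ ≤ M ^ z := by
    intro f
    filter_upwards [ae_all_iff.mpr (fun i : Fin z => hbdd (f i))] with ω hω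
    rw [Real.norm_eq_abs, Finset.abs_prod]
    calc ∏ i, |ξ (f i) ω| ≤ ∏ _i : Fin z, M :=
          Finset.prod_le_prod (fun i _ => abs_nonneg _) (fun i _ => hω i)
    _ = M ^ z := by simp
  have hint : ∀ f : Fin z → {A : Finset (Fin n) // A.card = v}, Integrable (fun ω => ∏ i, ξ (f i) ω) μ :=
    fun f => Integrable.mono' (integrable_const (M ^ z))
      (hprodmeas f).aestronglyMeasurable (hprodbdd f)
  have hterm : ∀ f : Fin z → {A : Finset (Fin n) // A.card = v}, |∫ ω, ∏ i, ξ (f i) ω ∂μ| ≤ M ^ z := by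
    intro f
    have := norm_integral_le_of_norm_le_const (μ := μ)
      (f := fun ω => ∏ i, ξ (f i) ω) (hprodbdd f)
    simpa [Real.norm_eq_abs, measure_univ] using this
  have hexp : ∀ ω, (∑ A, ξ A ω) ^ z = ∑ f : Fin z → {A : Finset (Fin n) // A.card = v}, ∏ i, ξ (f i) ω := by
    intro ω
    rw [Finset.sum_pow' Finset.univ (fun A => ξ A ω) z, Fintype.piFinset_univ]
  have hsplit : ∫ ω, (∑ A, ξ A ω) ^ z ∂μ = ∑ f : Fin z → {A : Finset (Fin n) // A.card = v}, ∫ ω, ∏ i, ξ (f i) ω ∂μ := by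
    simp_rw [hexp]
    exact integral_finset_sum _ (fun f _ => hint f)
  set bad : (Fin z → {A : Finset (Fin n) // A.card = v}) → Prop := fun f => ∀ i, ∃ j, j ≠ i ∧ ¬ Disjoint (f i).1 (f j).1
    with hbaddef
  have hnotbad : ∀ f : Fin z → {A : Finset (Fin n) // A.card = v}, ¬ bad f → ∫ ω, ∏ i, ξ (f i) ω ∂μ = 0 := by
    intro f hf
    simp only [hbaddef, not_forall] at hf
    obtain ⟨i₀, hi₀⟩ := hf
    push_neg at hi₀
    exact zero_term hmeas hmean hind f i₀ hi₀
  rw [hsplit, ← Finset.sum_filter_add_sum_filter_not Finset.univ bad]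
  rw [Finset.sum_eq_zero (fun f hf => hnotbad f (Finset.mem_filter.mp hf).2), add_zero]
  calc |∑ f ∈ Finset.univ.filter bad, ∫ ω, ∏ i, ξ (f i) ω ∂μ|
      ≤ ∑ f ∈ Finset.univ.filter bad, |∫ ω, ∏ i, ξ (f i) ω ∂μ| :=
        Finset.abs_sum_le_sum_abs _ _
    _ ≤ ∑ _f ∈ Finset.univ.filter bad, M ^ z :=
        Finset.sum_le_sum (fun f _ => hterm f)
    _ = (Finset.univ.filter bad).card * M ^ z := by
        rw [Finset.sum_const, nsmul_eq_mul]
    _ ≤ (2 ^ ((z * v - (z + 1) / 2) * z) * n ^ (z * v - (z + 1) / 2) : ℕ) * M ^ z := by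
        apply mul_le_mul_of_nonneg_right _ (pow_nonneg hM z)
        exact_mod_cast count_bad hz hv
    _ = (M ^ z * 2 ^ ((z * v - (z + 1) / 2) * z)) * (n : ℝ) ^ (z * v - (z + 1) / 2) := by
        push_cast
        ring


theorem stmt9 (v z : ℕ) (hv : 1 ≤ v) (hz : 1 ≤ z) (M : ℝ) (hM : 0 ≤ M) :
    (∃ K : ℝ, ∀ (n : ℕ) (Ω : Type) (_ : MeasurableSpace Ω) (μ : Measure Ω),
      IsProbabilityMeasure μ →
      ∀ ξ : {A : Finset (Fin n) // A.card = v} → Ω → ℝ,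
        (∀ A, Measurable (ξ A)) →
        (∀ A, ∀ᵐ ω ∂μ, |ξ A ω| ≤ M) →
        (∀ A, ∫ ω, ξ A ω ∂μ = 0) →
        IndepOverDisjoint (fun A => A.1) ξ μ →
        |∫ ω, (∑ A, ξ A ω) ^ z ∂μ| ≤ K * (n : ℝ) ^ (z * v - (z + 1) / 2)) ∧
    (Odd z →
      ∀ (Ω : ℕ → Type) (_ : ∀ n, MeasurableSpace (Ω n)) (μ : ∀ n, Measure (Ω n)),
      (∀ n, IsProbabilityMeasure (μ n)) →
      ∀ ξ : ∀ n : ℕ, {A : Finset (Fin n) // A.card = v} → Ω n → ℝ,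
        (∀ n A, Measurable (ξ n A)) →
        (∀ n A, ∀ᵐ ω ∂μ n, |ξ n A ω| ≤ M) →
        (∀ n A, ∫ ω, ξ n A ω ∂μ n = 0) →
        (∀ n, IndepOverDisjoint (fun A => A.1) (ξ n) (μ n)) →
        Tendsto (fun n : ℕ =>
            (∫ ω, (∑ A, ξ n A ω) ^ z ∂μ n) / (n : ℝ) ^ ((z : ℝ) * ((v : ℝ) - 1 / 2)))
          atTop (nhds 0)) := by
  set K : ℝ := M ^ z * 2 ^ ((z * v - (z + 1) / 2) * z) with hK
  have hKnn : 0 ≤ K := by positivity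
  have part1 : ∀ (n : ℕ) (Ω : Type) (_ : MeasurableSpace Ω) (μ : Measure Ω),
      IsProbabilityMeasure μ →
      ∀ ξ : {A : Finset (Fin n) // A.card = v} → Ω → ℝ,
        (∀ A, Measurable (ξ A)) →
        (∀ A, ∀ᵐ ω ∂μ, |ξ A ω| ≤ M) →
        (∀ A, ∫ ω, ξ A ω ∂μ = 0) →
        IndepOverDisjoint (fun A => A.1) ξ μ →
        |∫ ω, (∑ A, ξ A ω) ^ z ∂μ| ≤ K * (n : ℝ) ^ (z * v - (z + 1) / 2) := by
    intro n Ω mΩ μ hprob ξ hmeas hbdd hmean hind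
    exact main_bound hv hz hM n Ω μ ξ hmeas hbdd hmean hind
  refine ⟨⟨K, part1⟩, ?_⟩
  intro hodd Ω mΩ μ hprob ξ hmeas hbdd hmean hind
  have hexp : ((z * v - (z + 1) / 2 : ℕ) : ℝ) - (z : ℝ) * ((v : ℝ) - 1 / 2)
      = -(1 / 2) := by
    obtain ⟨k, hk⟩ := hodd
    subst hk
    have h1 : ((2 * k + 1) + 1) / 2 = k + 1 := by omega
    have h2 : ((2 * k + 1) + 1) / 2 ≤ (2 * k + 1) * v := by
      have : 2 * k + 1 ≤ (2 * k + 1) * v := Nat.le_mul_of_pos_right _ hv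
      omega
    rw [Nat.cast_sub h2, h1]
    push_cast
    ring
  apply squeeze_zero_norm' (a := fun n : ℕ => K * (n : ℝ) ^ (-(1 / 2) : ℝ))
  · filter_upwards [eventually_ge_atTop 1] with n hn
    have hnpos : (0 : ℝ) < n := by exact_mod_cast hn
    have hb := part1 n (Ω n) (mΩ n) (μ n) (hprob n) (ξ n)
      (hmeas n) (hbdd n) (hmean n) (hind n)
    have hrpos : (0 : ℝ) < (n : ℝ) ^ ((z : ℝ) * ((v : ℝ) - 1 / 2)) :=
      Real.rpow_pos_of_pos hnpos _
    calc ‖(∫ ω, (∑ A, ξ n A ω) ^ z ∂μ n) / (n : ℝ) ^ ((z : ℝ) * ((v : ℝ) - 1 / 2))‖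
        = |∫ ω, (∑ A, ξ n A ω) ^ z ∂μ n| / (n : ℝ) ^ ((z : ℝ) * ((v : ℝ) - 1 / 2)) := by
          rw [Real.norm_eq_abs, abs_div, abs_of_pos hrpos]
      _ ≤ (K * (n : ℝ) ^ (z * v - (z + 1) / 2)) /
            (n : ℝ) ^ ((z : ℝ) * ((v : ℝ) - 1 / 2)) := by gcongr
      _ = K * (n : ℝ) ^ (-(1 / 2) : ℝ) := by
          rw [mul_div_assoc, ← Real.rpow_natCast (n : ℝ) (z * v - (z + 1) / 2),
            ← Real.rpow_sub hnpos, hexp]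
  · have h0 := (tendsto_rpow_neg_atTop (by norm_num : (0 : ℝ) < 1 / 2)).comp
      tendsto_natCast_atTop_atTop
    have := h0.const_mul K
    simpa using this
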